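/- Let v, u be points of an n-point set P ⊆ [0,1]² such that every cell of the regular √n × √n grid on [0,1]² contains at most b points of P. Let r > 0 and let N(x) = {p ∈ P : ‖p − x‖ ≤ r}. Then |N(v) Δ N(u)| ≤ b · (n · Area(D(v,r) Δ D(u,r)) + c·(r·√n + 1)) for an absolute constant c, where D(x,r) is the disk of radius r about x. -/

import Mathlib

open MeasureTheory Metric
open scoped Classical ENNReal

/-- `p` lies in cell `(i, j)` of the regular `m × m` grid on the unit square
(cells are closed squares of side `1/m`). -/
def InCell (m : ℕ) (i j : Fin m) (p : EuclideanSpace ℝ (Fin 2)) : Prop :=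
  (i : ℝ) / m ≤ p 0 ∧ p 0 ≤ ((i : ℝ) + 1) / m ∧
  (j : ℝ) / m ≤ p 1 ∧ p 1 ≤ ((j : ℝ) + 1) / m

local notation "E2" => EuclideanSpace ℝ (Fin 2)

/-- The index of the grid interval containing `t`. -/
noncomputable def gridIdx (m : ℕ) (hm : 0 < m) (t : ℝ) : Fin m :=
  ⟨min (m - 1) ⌊t * m⌋₊, lt_of_le_of_lt (min_le_left _ _) (Nat.sub_lt hm one_pos)⟩

lemma gridIdx_spec (m : ℕ) (hm : 0 < m) {t : ℝ} (h0 : 0 ≤ t) (h1 : t ≤ 1) :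
    ((gridIdx m hm t : ℕ) : ℝ) / m ≤ t ∧ t ≤ (((gridIdx m hm t : ℕ) : ℝ) + 1) / m := by
  have hmR : (0:ℝ) < m := by exact_mod_cast hm
  have hidx : (gridIdx m hm t : ℕ) = min (m - 1) ⌊t * m⌋₊ := rfl
  constructor
  · rw [div_le_iff₀ hmR, hidx]
    calc ((min (m - 1) ⌊t * m⌋₊ : ℕ) : ℝ) ≤ ((⌊t * m⌋₊ : ℕ) : ℝ) := by
          exact_mod_cast min_le_right _ _
      _ ≤ t * m := Nat.floor_le (by positivity)
  · rw [le_div_iff₀ hmR, hidx]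
    rcases le_or_gt ⌊t * m⌋₊ (m - 1) with h | h
    · rw [min_eq_right h]
      have := Nat.lt_floor_add_one (t * m)
      push_cast at this ⊢
      linarith
    · rw [min_eq_left h.le]
      have hcast : ((m - 1 : ℕ) : ℝ) + 1 = m := by
        have h1m : (1:ℕ) ≤ m := hm
        push_cast [Nat.cast_sub h1m]
        ring
      rw [hcast]
      nlinarith

/-- The closed cell of the grid as a set. -/
def cellSet (m : ℕ) (q : Fin m × Fin m) : Set E2 := {p | InCell m q.1 q.2 p}

lemma mem_cellSet {m : ℕ} {q : Fin m × Fin m} {p : E2} :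
    p ∈ cellSet m q ↔ ((q.1 : ℝ) / m ≤ p 0 ∧ p 0 ≤ ((q.1 : ℝ) + 1) / m ∧
      (q.2 : ℝ) / m ≤ p 1 ∧ p 1 ≤ ((q.2 : ℝ) + 1) / m) := Iff.rfl

/-- The open cell of the grid. -/
def openCell (m : ℕ) (q : Fin m × Fin m) : Set E2 :=
  {p | p 0 ∈ Set.Ioo ((q.1 : ℝ) / m) (((q.1 : ℝ) + 1) / m) ∧
       p 1 ∈ Set.Ioo ((q.2 : ℝ) / m) (((q.2 : ℝ) + 1) / m)}

lemma openCell_subset_cellSet (m : ℕ) (q : Fin m × Fin m) :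
    openCell m q ⊆ cellSet m q := by
  intro p hp
  obtain ⟨⟨h1, h2⟩, h3, h4⟩ := hp
  exact mem_cellSet.mpr ⟨h1.le, h2.le, h3.le, h4.le⟩

lemma continuous_coord (i : Fin 2) : Continuous (fun p : E2 => p i) :=
  (continuous_apply i).comp (PiLp.continuousLinearEquiv 2 ℝ _).continuous

lemma isOpen_openCell (m : ℕ) (q : Fin m × Fin m) : IsOpen (openCell m q) :=
  (isOpen_Ioo.preimage (continuous_coord 0)).inter (isOpen_Ioo.preimage (continuous_coord 1))

lemma volume_box (a b c d : ℝ) :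
    volume {p : E2 | p 0 ∈ Set.Ioo a b ∧ p 1 ∈ Set.Ioo c d} =
      ENNReal.ofReal (b - a) * ENNReal.ofReal (d - c) := by
  have hmeas : NullMeasurableSet {p : E2 | p 0 ∈ Set.Ioo a b ∧ p 1 ∈ Set.Ioo c d} volume :=
    (((isOpen_Ioo.preimage (continuous_coord 0)).inter
      (isOpen_Ioo.preimage (continuous_coord 1))).measurableSet).nullMeasurableSet
  have h := ((EuclideanSpace.volume_preserving_symm_measurableEquiv_toLp (Fin 2)).symm).measure_preimage
    hmeas
  rw [← h]
  have heq : (MeasurableEquiv.toLp 2 (Fin 2 → ℝ)).symm.symm ⁻¹'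
      {p : E2 | p 0 ∈ Set.Ioo a b ∧ p 1 ∈ Set.Ioo c d}
      = Set.univ.pi (fun i : Fin 2 => if i = 0 then Set.Ioo a b else Set.Ioo c d) := by
    ext g
    simp [MeasurableEquiv.symm_symm, MeasurableEquiv.coe_toLp, Fin.forall_fin_two, Set.mem_pi]
  rw [heq, volume_pi_pi]
  simp [Fin.prod_univ_two]

lemma volume_openCell {m : ℕ} (hm : 0 < m) (q : Fin m × Fin m) :
    volume (openCell m q) = ENNReal.ofReal (1 / (m : ℝ) ^ 2) := by
  have hmR : (0:ℝ) < m := by exact_mod_cast hm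
  have : openCell m q = {p : E2 | p 0 ∈ Set.Ioo ((q.1 : ℝ) / m) (((q.1 : ℝ) + 1) / m) ∧
      p 1 ∈ Set.Ioo ((q.2 : ℝ) / m) (((q.2 : ℝ) + 1) / m)} := rfl
  rw [this, volume_box]
  have e1 : ((q.1 : ℝ) + 1) / m - (q.1 : ℝ) / m = 1 / m := by ring
  have e2 : ((q.2 : ℝ) + 1) / m - (q.2 : ℝ) / m = 1 / m := by ring
  rw [e1, e2, ← ENNReal.ofReal_mul (by positivity)]
  congr 1
  ring

lemma openCell_disjoint {m : ℕ} (hm : 0 < m) {q q' : Fin m × Fin m} (h : q ≠ q') :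
    Disjoint (openCell m q) (openCell m q') := by
  have hmR : (0:ℝ) < m := by exact_mod_cast hm
  rw [Set.disjoint_left]
  intro p hp hp'
  obtain ⟨⟨a1, a2⟩, a3, a4⟩ := hp
  obtain ⟨⟨b1, b2⟩, b3, b4⟩ := hp'
  have key : ∀ (a b : ℕ) (x : ℝ), a < b → x < ((a:ℝ) + 1) / m → (b:ℝ) / m < x → False := by
    intro a b x hab hx1 hx2
    have hcast : ((a:ℝ) + 1) ≤ (b:ℝ) := by exact_mod_cast hab
    have : ((a:ℝ) + 1) / m ≤ (b:ℝ) / m := by gcongr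
    linarith
  have hne : (q.1 : ℕ) ≠ (q'.1 : ℕ) ∨ (q.2 : ℕ) ≠ (q'.2 : ℕ) := by
    by_contra hc
    push_neg at hc
    exact h (Prod.ext (Fin.val_injective hc.1) (Fin.val_injective hc.2))
  rcases hne with hne | hne
  · rcases lt_or_gt_of_ne hne with hlt | hlt
    · exact key _ _ _ hlt a2 b1
    · exact key _ _ _ hlt b2 a1
  · rcases lt_or_gt_of_ne hne with hlt | hlt
    · exact key _ _ _ hlt a4 b3
    · exact key _ _ _ hlt b4 a3

lemma card_cells_le {m : ℕ} (hm : 0 < m) (A : Set E2) (hA : volume A ≠ ⊤)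
    (Q : Finset (Fin m × Fin m)) (hQ : ∀ q ∈ Q, openCell m q ⊆ A) :
    (Q.card : ℝ) ≤ (m : ℝ) ^ 2 * (volume A).toReal := by
  have hmR : (0:ℝ) < m := by exact_mod_cast hm
  have key : (Q.card : ℝ≥0∞) * ENNReal.ofReal (1 / (m : ℝ) ^ 2) ≤ volume A := by
    calc (Q.card : ℝ≥0∞) * ENNReal.ofReal (1 / (m : ℝ) ^ 2)
        = ∑ q ∈ Q, volume (openCell m q) := by
          rw [Finset.sum_congr rfl (fun q _ => volume_openCell hm q), Finset.sum_const,
            nsmul_eq_mul]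
      _ = volume (⋃ q ∈ Q, openCell m q) :=
          (measure_biUnion_finset (fun q _ q' _ h => openCell_disjoint hm h)
            (fun q _ => (isOpen_openCell m q).measurableSet)).symm
      _ ≤ volume A := measure_mono (Set.iUnion₂_subset hQ)
  have h2 := ENNReal.toReal_mono hA key
  rw [ENNReal.toReal_mul, ENNReal.toReal_natCast, ENNReal.toReal_ofReal (by positivity)] at h2
  calc (Q.card : ℝ) = ((Q.card : ℝ) * (1 / (m : ℝ) ^ 2)) * (m : ℝ) ^ 2 := by field_simp
    _ ≤ (volume A).toReal * (m : ℝ) ^ 2 := mul_le_mul_of_nonneg_right h2 (by positivity)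
    _ = (m : ℝ) ^ 2 * (volume A).toReal := mul_comm _ _

lemma dist_le_of_mem_cell {m : ℕ} (hm : 0 < m) {q : Fin m × Fin m} {z y : E2}
    (hz : z ∈ cellSet m q) (hy : y ∈ cellSet m q) : dist z y ≤ 2 / m := by
  have hmR : (0:ℝ) < m := by exact_mod_cast hm
  obtain ⟨z1, z2, z3, z4⟩ := mem_cellSet.mp hz
  obtain ⟨y1, y2, y3, y4⟩ := mem_cellSet.mp hy
  have e1 : ((q.1 : ℝ) + 1) / m - (q.1 : ℝ) / m = 1 / m := by ring
  have e2 : ((q.2 : ℝ) + 1) / m - (q.2 : ℝ) / m = 1 / m := by ring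
  have h0 : dist (z 0) (y 0) ≤ 1 / m := by
    rw [Real.dist_eq, abs_le]; constructor <;> linarith
  have h1 : dist (z 1) (y 1) ≤ 1 / m := by
    rw [Real.dist_eq, abs_le]; constructor <;> linarith
  rw [EuclideanSpace.dist_eq, Fin.sum_univ_two]
  have hsum : dist (z 0) (y 0) ^ 2 + dist (z 1) (y 1) ^ 2 ≤ (2 / m) ^ 2 := by
    have d0 := dist_nonneg (x := z 0) (y := y 0)
    have d1 := dist_nonneg (x := z 1) (y := y 1)
    have s0 : dist (z 0) (y 0) ^ 2 ≤ (1 / (m:ℝ)) ^ 2 := pow_le_pow_left₀ d0 h0 2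
    have s1 : dist (z 1) (y 1) ^ 2 ≤ (1 / (m:ℝ)) ^ 2 := pow_le_pow_left₀ d1 h1 2
    have e4 : (2 / (m:ℝ)) ^ 2 = 4 * (1 / (m:ℝ)) ^ 2 := by ring
    have hpos : (0:ℝ) ≤ (1 / (m:ℝ)) ^ 2 := by positivity
    linarith
  calc Real.sqrt (dist (z 0) (y 0) ^ 2 + dist (z 1) (y 1) ^ 2)
      ≤ Real.sqrt ((2 / m) ^ 2) := Real.sqrt_le_sqrt hsum
    _ = 2 / m := Real.sqrt_sq (by positivity)

lemma convex_cellSet (m : ℕ) (q : Fin m × Fin m) : Convex ℝ (cellSet m q) := by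
  intro p hp w hw a b ha hb hab
  obtain ⟨p1, p2, p3, p4⟩ := mem_cellSet.mp hp
  obtain ⟨w1, w2, w3, w4⟩ := mem_cellSet.mp hw
  have e0 : (a • p + b • w) 0 = a * p 0 + b * w 0 := by
    simp [PiLp.add_apply, PiLp.smul_apply, smul_eq_mul]
  have e1 : (a • p + b • w) 1 = a * p 1 + b * w 1 := by
    simp [PiLp.add_apply, PiLp.smul_apply, smul_eq_mul]
  have hlow : ∀ (L x y : ℝ), L ≤ x → L ≤ y → L ≤ a * x + b * y := by
    intro L x y hx hy
    have h1 : a * L ≤ a * x := mul_le_mul_of_nonneg_left hx ha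
    have h2 : b * L ≤ b * y := mul_le_mul_of_nonneg_left hy hb
    have h3 : a * L + b * L = L := by rw [← add_mul, hab, one_mul]
    linarith
  have hhigh : ∀ (U x y : ℝ), x ≤ U → y ≤ U → a * x + b * y ≤ U := by
    intro U x y hx hy
    have h1 : a * x ≤ a * U := mul_le_mul_of_nonneg_left hx ha
    have h2 : b * y ≤ b * U := mul_le_mul_of_nonneg_left hy hb
    have h3 : a * U + b * U = U := by rw [← add_mul, hab, one_mul]
    linarith
  refine mem_cellSet.mpr ⟨?_, ?_, ?_, ?_⟩ <;> simp only [e0, e1]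
  · exact hlow _ _ _ p1 w1
  · exact hhigh _ _ _ p2 w2
  · exact hlow _ _ _ p3 w3
  · exact hhigh _ _ _ p4 w4

lemma volume_closedBall2 (x : E2) (t : ℝ) :
    volume (closedBall x t) = ENNReal.ofReal t ^ 2 * ENNReal.ofReal Real.pi := by
  rw [EuclideanSpace.volume_closedBall]
  norm_num [Real.Gamma_two, Real.sq_sqrt Real.pi_pos.le]

lemma volume_ball2 (x : E2) (t : ℝ) :
    volume (ball x t) = ENNReal.ofReal t ^ 2 * ENNReal.ofReal Real.pi := by
  rw [EuclideanSpace.volume_ball]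
  norm_num [Real.Gamma_two, Real.sq_sqrt Real.pi_pos.le]

lemma card_sphere_cells {m : ℕ} (hm : 0 < m) (x : E2) {r : ℝ} (hr : 0 < r) :
    (((Finset.univ.filter fun q : Fin m × Fin m =>
        ∃ z ∈ cellSet m q, dist z x = r)).card : ℝ) ≤ 100 * (r * m + 1) := by
  have hmR : (0:ℝ) < m := by exact_mod_cast hm
  have hs0 : (0:ℝ) < 2 / m := by positivity
  have hfin : ∀ t : ℝ, ENNReal.ofReal t ^ 2 * ENNReal.ofReal Real.pi ≠ ⊤ :=
    fun t => ENNReal.mul_ne_top (ENNReal.pow_ne_top ENNReal.ofReal_ne_top) ENNReal.ofReal_ne_top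
  have hvol : volume (closedBall x (r + 2 / m) \ ball x (r - 2 / m)) =
      ENNReal.ofReal (r + 2 / m) ^ 2 * ENNReal.ofReal Real.pi
        - ENNReal.ofReal (r - 2 / m) ^ 2 * ENNReal.ofReal Real.pi := by
    rw [measure_diff (ball_subset_closedBall.trans
        (closedBall_subset_closedBall (by linarith))) measurableSet_ball.nullMeasurableSet
        (by rw [volume_ball2]; exact hfin _),
      volume_closedBall2, volume_ball2]
  have hAfin : volume (closedBall x (r + 2 / m) \ ball x (r - 2 / m)) ≠ ⊤ := by
    rw [hvol]; exact ENNReal.sub_ne_top (hfin _)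
  have hcard := card_cells_le hm (closedBall x (r + 2 / m) \ ball x (r - 2 / m)) hAfin
    (Finset.univ.filter fun q : Fin m × Fin m => ∃ z ∈ cellSet m q, dist z x = r) ?_
  · refine hcard.trans ?_
    have htv : (volume (closedBall x (r + 2 / m) \ ball x (r - 2 / m))).toReal
        = (r + 2 / m) ^ 2 * Real.pi - (max (r - 2 / m) 0) ^ 2 * Real.pi := by
      rw [hvol, ENNReal.toReal_sub_of_le ?_ (hfin _)]
      · rw [ENNReal.toReal_mul, ENNReal.toReal_mul, ENNReal.toReal_pow, ENNReal.toReal_pow,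
          ENNReal.toReal_ofReal Real.pi_pos.le, ENNReal.toReal_ofReal (by linarith : (0:ℝ) ≤ r + 2 / m),
          ENNReal.toReal_ofReal']
      · gcongr
        linarith
    rw [htv]
    have hπ4 := Real.pi_le_four
    have hπ0 := Real.pi_pos
    rcases le_or_gt (2 / (m:ℝ)) r with h | h
    · rw [max_eq_left (by linarith)]
      have key : (m:ℝ) ^ 2 * ((r + 2 / m) ^ 2 * Real.pi - (r - 2 / m) ^ 2 * Real.pi)
          = 8 * Real.pi * r * m := by
        field_simp
        ring
      rw [key]
      nlinarith [mul_nonneg (sub_nonneg.mpr Real.pi_le_four) (mul_nonneg hr.le hmR.le),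
        mul_nonneg hr.le hmR.le]
    · rw [max_eq_right (by linarith)]
      have key : (m:ℝ) ^ 2 * ((r + 2 / m) ^ 2 * Real.pi - 0 ^ 2 * Real.pi)
          = (r * m + 2) ^ 2 * Real.pi := by
        field_simp
        ring
      rw [key]
      have hrm : r * m < 2 := (lt_div_iff₀ hmR).mp h
      have hrm0 : 0 ≤ r * m := mul_nonneg hr.le hmR.le
      nlinarith [mul_nonneg hπ0.le (by nlinarith : (0:ℝ) ≤ 16 - (r * m + 2) ^ 2)]
  · intro q hq
    simp only [Finset.mem_filter] at hq
    obtain ⟨-, z, hzcell, hzd⟩ := hq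
    intro y hy
    have hycell : y ∈ cellSet m q := openCell_subset_cellSet m q hy
    have hd := dist_le_of_mem_cell hm hycell hzcell
    constructor
    · rw [mem_closedBall]
      calc dist y x ≤ dist y z + dist z x := dist_triangle _ _ _
        _ ≤ 2 / m + r := by rw [hzd] at *; linarith
        _ = r + 2 / m := by ring
    · intro hball
      rw [mem_ball] at hball
      have htr : dist z x ≤ dist z y + dist y x := dist_triangle _ _ _
      rw [dist_comm z y] at htr
      rw [hzd] at htr
      linarith

lemma cell_ivt {m : ℕ} (q : Fin m × Fin m) (w : E2) {r : ℝ} {p x : E2}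
    (hp : p ∈ cellSet m q) (hx : x ∈ cellSet m q)
    (h1 : dist p w ≤ r) (h2 : r ≤ dist x w) : ∃ z ∈ cellSet m q, dist z w = r := by
  have hpc := (convex_cellSet m q).isPreconnected
  have hcont : ContinuousOn (fun z : E2 => dist z w) (cellSet m q) :=
    (Continuous.dist continuous_id continuous_const).continuousOn
  have := hpc.intermediate_value hp hx hcont (Set.mem_Icc.mpr ⟨h1, h2⟩)
  obtain ⟨z, hz, hzd⟩ := this
  exact ⟨z, hz, hzd⟩

/-- There is an absolute constant `c` such that: if `P` is a set of `n = m²` points in the unit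
square with at most `b` points in each cell of the regular `√n × √n` grid, `v, u ∈ P` and
`N(x) = {p ∈ P : ‖p − x‖ ≤ r}`, then
`|N(v) Δ N(u)| ≤ b·(n·Area(D(v,r) Δ D(u,r)) + c·(r·√n + 1))`. -/
theorem points_in_symmDiff_of_disks :
    ∃ c : ℝ, 0 < c ∧
      ∀ (m b : ℕ) (P : Finset (EuclideanSpace ℝ (Fin 2))) (r : ℝ), 0 < r →
        P.card = m ^ 2 →
        (∀ p ∈ P, ∀ i, 0 ≤ p i ∧ p i ≤ 1) →
        (∀ i j : Fin m, (P.filter (fun p => InCell m i j p)).card ≤ b) →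
        ∀ v ∈ P, ∀ u ∈ P,
          (((P.filter fun p => dist p v ≤ r) \ (P.filter fun p => dist p u ≤ r) ∪
              (P.filter fun p => dist p u ≤ r) \ (P.filter fun p => dist p v ≤ r)).card : ℝ) ≤
            (b : ℝ) * ((m ^ 2 : ℝ) *
                (volume ((closedBall v r \ closedBall u r) ∪
                  (closedBall u r \ closedBall v r))).toReal
              + c * (r * Real.sqrt ((m : ℝ) ^ 2) + 1)) := by
  refine ⟨200, by norm_num, ?_⟩
  intro m b P r hr hcard hbox hcell v hv u hu
  have hm : 0 < m := by
    rcases Nat.eq_zero_or_pos m with h | h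
    · exfalso
      subst h
      simp only [pow_succ, pow_zero, one_mul, Nat.zero_mul, Nat.mul_zero] at hcard
      rw [Finset.card_eq_zero] at hcard
      · simp [hcard] at hv
    · exact h
  have hmR : (0:ℝ) < m := by exact_mod_cast hm
  set S : Set E2 := (closedBall v r \ closedBall u r) ∪ (closedBall u r \ closedBall v r)
    with hS
  set T := ((P.filter fun p => dist p v ≤ r) \ (P.filter fun p => dist p u ≤ r) ∪
      (P.filter fun p => dist p u ≤ r) \ (P.filter fun p => dist p v ≤ r)) with hT
  have hTP : ∀ p ∈ T, p ∈ P := by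
    intro p hp
    rw [hT] at hp
    simp only [Finset.mem_union, Finset.mem_sdiff, Finset.mem_filter] at hp
    tauto
  have hTmem : ∀ p ∈ T, (dist p v ≤ r ∧ ¬ dist p u ≤ r) ∨ (dist p u ≤ r ∧ ¬ dist p v ≤ r) := by
    intro p hp
    rw [hT] at hp
    simp only [Finset.mem_union, Finset.mem_sdiff, Finset.mem_filter] at hp
    tauto
  set f : E2 → Fin m × Fin m := fun p => (gridIdx m hm (p 0), gridIdx m hm (p 1)) with hf
  have hfcell : ∀ p ∈ P, p ∈ cellSet m (f p) := by
    intro p hp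
    have h0 := hbox p hp 0
    have h1 := hbox p hp 1
    exact mem_cellSet.mpr ⟨(gridIdx_spec m hm h0.1 h0.2).1, (gridIdx_spec m hm h0.1 h0.2).2,
      (gridIdx_spec m hm h1.1 h1.2).1, (gridIdx_spec m hm h1.1 h1.2).2⟩
  have hfiber : ∀ q : Fin m × Fin m, (T.filter fun p => f p = q).card ≤ b := by
    intro q
    refine le_trans (Finset.card_le_card ?_) (hcell q.1 q.2)
    intro p hp
    rw [Finset.mem_filter] at hp ⊢
    obtain ⟨hpT, hpf⟩ := hp
    refine ⟨hTP p hpT, ?_⟩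
    have hc := hfcell p (hTP p hpT)
    rw [hpf] at hc
    exact hc
  set Q : Finset (Fin m × Fin m) :=
    Finset.univ.filter (fun q => (T.filter fun p => f p = q).Nonempty) with hQ
  have hTcard : T.card ≤ b * Q.card := by
    rw [Finset.card_eq_sum_card_fiberwise (f := f) (t := Finset.univ)
      (fun x _ => Finset.mem_univ _)]
    rw [← Finset.sum_subset (Finset.filter_subset _ Finset.univ) (by
      intro q _ hnq
      have hne : ¬ (T.filter fun p => f p = q).Nonempty := by
        intro hne
        exact hnq (Finset.mem_filter.mpr ⟨Finset.mem_univ _, hne⟩)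
      rw [Finset.not_nonempty_iff_eq_empty] at hne
      rw [hne, Finset.card_empty])]
    calc ∑ q ∈ Q, (T.filter fun p => f p = q).card ≤ ∑ _q ∈ Q, b :=
          Finset.sum_le_sum (fun q _ => hfiber q)
      _ = Q.card * b := by rw [Finset.sum_const, smul_eq_mul]
      _ = b * Q.card := mul_comm _ _
  set Q1 := Q.filter (fun q => cellSet m q ⊆ S) with hQ1
  set Q2 := Q.filter (fun q => ¬ cellSet m q ⊆ S) with hQ2
  have hsplit : Q1.card + Q2.card = Q.card :=
    Finset.card_filter_add_card_filter_not _
  have hSfin : volume S ≠ ⊤ := by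
    have h1 : S ⊆ closedBall v r ∪ closedBall u r := by
      rw [hS]
      rintro z (hz | hz)
      · exact Or.inl hz.1
      · exact Or.inr hz.1
    refine ne_top_of_le_ne_top ?_ (measure_mono h1)
    exact ((measure_union_le _ _).trans_lt (ENNReal.add_lt_top.mpr
      ⟨(isCompact_closedBall v r).measure_lt_top,
        (isCompact_closedBall u r).measure_lt_top⟩)).ne
  have hQ1card : (Q1.card : ℝ) ≤ (m : ℝ) ^ 2 * (volume S).toReal :=
    card_cells_le hm S hSfin Q1
      (fun q hq => (openCell_subset_cellSet m q).trans (Finset.mem_filter.mp hq).2)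
  have hQ2sub : Q2 ⊆ (Finset.univ.filter fun q => ∃ z ∈ cellSet m q, dist z v = r) ∪
      (Finset.univ.filter fun q => ∃ z ∈ cellSet m q, dist z u = r) := by
    intro q hq
    rw [hQ2, Finset.mem_filter] at hq
    obtain ⟨hqQ, hnsub⟩ := hq
    rw [hQ, Finset.mem_filter] at hqQ
    obtain ⟨-, p, hpT⟩ := hqQ
    obtain ⟨hpT', hpf⟩ := Finset.mem_filter.mp hpT
    have hpcell : p ∈ cellSet m q := hpf ▸ hfcell p (hTP p hpT')
    obtain ⟨x, hxcell, hxS⟩ := Set.not_subset.mp hnsub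
    have hpS := hTmem p hpT'
    have hx1 : dist x v ≤ r → dist x u ≤ r := by
      intro hd
      by_contra hd'
      exact hxS (Or.inl ⟨mem_closedBall.mpr hd, fun hc => hd' (mem_closedBall.mp hc)⟩)
    have hx2 : dist x u ≤ r → dist x v ≤ r := by
      intro hd
      by_contra hd'
      exact hxS (Or.inr ⟨mem_closedBall.mpr hd, fun hc => hd' (mem_closedBall.mp hc)⟩)
    rw [Finset.mem_union, Finset.mem_filter, Finset.mem_filter]
    rcases hpS with ⟨h1, h2⟩ | ⟨h1, h2⟩
    · by_cases hxv : dist x v ≤ r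
      · exact Or.inr ⟨Finset.mem_univ _,
          cell_ivt q u hxcell hpcell (hx1 hxv) (le_of_not_ge h2)⟩
      · exact Or.inl ⟨Finset.mem_univ _,
          cell_ivt q v hpcell hxcell h1 (le_of_not_ge hxv)⟩
    · by_cases hxu : dist x u ≤ r
      · exact Or.inl ⟨Finset.mem_univ _,
          cell_ivt q v hxcell hpcell (hx2 hxu) (le_of_not_ge h2)⟩
      · exact Or.inr ⟨Finset.mem_univ _,
          cell_ivt q u hpcell hxcell h1 (le_of_not_ge hxu)⟩
  have hQ2card : (Q2.card : ℝ) ≤ 200 * (r * m + 1) := by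
    have hle := Finset.card_le_card hQ2sub
    have hle2 := Finset.card_union_le
      (Finset.univ.filter fun q : Fin m × Fin m => ∃ z ∈ cellSet m q, dist z v = r)
      (Finset.univ.filter fun q : Fin m × Fin m => ∃ z ∈ cellSet m q, dist z u = r)
    have hv' := card_sphere_cells hm v hr
    have hu' := card_sphere_cells hm u hr
    have : (Q2.card : ℝ) ≤
        ((Finset.univ.filter fun q : Fin m × Fin m => ∃ z ∈ cellSet m q, dist z v = r).card : ℝ) +
        ((Finset.univ.filter fun q : Fin m × Fin m => ∃ z ∈ cellSet m q, dist z u = r).card : ℝ) := by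
      exact_mod_cast le_trans hle hle2
    linarith
  rw [Real.sqrt_sq (by positivity : (0:ℝ) ≤ (m:ℝ))]
  calc (T.card : ℝ) ≤ (b : ℝ) * (Q.card : ℝ) := by exact_mod_cast hTcard
    _ = (b : ℝ) * ((Q1.card : ℝ) + (Q2.card : ℝ)) := by
        rw [← hsplit]; push_cast; ring
    _ ≤ (b : ℝ) * ((m : ℝ) ^ 2 * (volume S).toReal + 200 * (r * m + 1)) := by
        refine mul_le_mul_of_nonneg_left ?_ (Nat.cast_nonneg b)
        exact add_le_add hQ1card hQ2card
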